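/- The generalized α-pass algorithm with parameter q = 2 satisfies F(v̂) ≥ (8/9) F(v*) for the Potts clique potential with λ > 0. -/

import Mathlib

open Finset

private def cnt {n R : ℕ} (u : Fin n → Fin R) (v : Fin R) : ℕ :=
  (Finset.univ.filter fun j => u j = v).card

private lemma cnt_sum {n R : ℕ} (u : Fin n → Fin R) : ∑ v, cnt u v = n := by
  classical
  have h := Finset.card_eq_sum_card_fiberwise
    (f := u) (s := (Finset.univ : Finset (Fin n))) (t := Finset.univ)
    (fun x _ => Finset.mem_univ _)
  simpa [cnt] using h.symm

private lemma cnt_le {n R : ℕ} (u : Fin n → Fin R) (v : Fin R) : cnt u v ≤ n := by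
  simpa [cnt] using Finset.card_filter_le (Finset.univ : Finset (Fin n)) (fun j => u j = v)

private lemma cnt_pair {n R : ℕ} (u : Fin n → Fin R) {α β : Fin R} (h : α ≠ β) :
    (Finset.univ.filter fun j => u j = α ∨ u j = β).card = cnt u α + cnt u β := by
  classical
  rw [Finset.filter_or, Finset.card_union_of_disjoint]
  · rfl
  · exact Finset.disjoint_left.2 fun j hj1 hj2 =>
      h (((Finset.mem_filter.1 hj1).2).symm.trans (Finset.mem_filter.1 hj2).2)

private lemma sq_sum_ge_single {n R : ℕ} (u : Fin n → Fin R) (α : Fin R) :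
    ((cnt u α : ℝ))^2 ≤ ∑ v, ((cnt u v : ℝ))^2 :=
  Finset.single_le_sum (f := fun v => ((cnt u v : ℝ))^2) (fun v _ => by positivity)
    (Finset.mem_univ α)

private lemma sq_sum_ge_pair {n R : ℕ} (u : Fin n → Fin R) {α β : Fin R} (h : α ≠ β) :
    ((cnt u α : ℝ))^2 + ((cnt u β : ℝ))^2 ≤ ∑ v, ((cnt u v : ℝ))^2 := by
  classical
  have h2 := Finset.sum_le_sum_of_subset_of_nonneg
    (f := fun v => ((cnt u v : ℝ))^2) (s := ({α, β} : Finset (Fin R))) (t := Finset.univ)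
    (Finset.subset_univ _) (fun v _ _ => by positivity)
  simpa [Finset.sum_pair h] using h2

private lemma combine_bounds (lam P s A B Y Fv : ℝ) (hlam : 0 < lam) (hP : 0 ≤ P)
    (hb0 : lam * (A + Y)^2 ≤ Fv) (hb1 : P + lam * A^2 ≤ Fv)
    (hb2 : P + lam * ((A + B)^2 / 2) ≤ Fv)
    (hs : s ≤ A^2 + B * Y) (hBA : B ≤ A) (hBnn : 0 ≤ B) (hBY : B ≤ Y) :
    (8/9) * (P + lam * s) ≤ Fv := by
  by_cases hcase : 2 * B ≤ A
  · have key : 8 * s ≤ (A + Y)^2 + 8 * A^2 := by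
      nlinarith [sq_nonneg (A - Y), mul_nonneg (by linarith : (0:ℝ) ≤ A - 2*B)
        (by linarith : (0:ℝ) ≤ Y)]
    have hk := mul_le_mul_of_nonneg_left key hlam.le
    linarith
  · push_neg at hcase
    have key : 8 * s ≤ (A + Y)^2 + 8 * ((A + B)^2 / 2) := by
      nlinarith [sq_nonneg (Y + A - 4*B),
        mul_nonneg (by linarith : (0:ℝ) ≤ A - B) (by linarith : (0:ℝ) ≤ 3*B - A)]
    have hk := mul_le_mul_of_nonneg_left key hlam.le
    linarith

/-- The generalized α-pass algorithm with parameter `q = 2` (which, for every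
set `A` of at most two values `{α,β}` and every count `k`, considers an assignment with
exactly `k` vertices valued in `A` that is vertex-score-optimal among such assignments)
satisfies `F(v̂) ≥ (8/9) F(v*)` for the Potts clique potential with `λ > 0`. -/
theorem generalized_alpha_pass_eight_ninths
    {n R : ℕ} (lam : ℝ) (hlam : 0 < lam)
    (ψ : Fin n → Fin R → ℝ) (hψ : ∀ j v, 0 ≤ ψ j v)
    (F : (Fin n → Fin R) → ℝ)
    (hF : ∀ w, F w = ∑ j, ψ j (w j) +
      lam * ∑ v, ((Finset.univ.filter fun j => w j = v).card : ℝ) ^ 2)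
    (vhat : Fin n → Fin R)
    (hvhat : ∀ (α β : Fin R) (k : ℕ), k ≤ n → ∃ u : Fin n → Fin R,
      (Finset.univ.filter fun j => u j = α ∨ u j = β).card = k ∧
      (∀ w : Fin n → Fin R,
        (Finset.univ.filter fun j => w j = α ∨ w j = β).card = k →
        ∑ j, ψ j (w j) ≤ ∑ j, ψ j (u j)) ∧
      F u ≤ F vhat) :
    ∀ w : Fin n → Fin R, (8 / 9) * F w ≤ F vhat := by
  classical
  have hF' : ∀ u : Fin n → Fin R, F u = ∑ j, ψ j (u j) + lam * ∑ v, ((cnt u v : ℝ))^2 := hF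
  intro w
  rcases Nat.eq_zero_or_pos R with hR0 | hRpos
  · subst hR0
    have hn : n = 0 := by
      rcases Nat.eq_zero_or_pos n with h | h
      · exact h
      · exact (w ⟨0, h⟩).elim0
    subst hn
    rw [hF w, hF vhat]
    simp
  -- pick α with maximal count in w
  have hne : (Finset.univ : Finset (Fin R)).Nonempty := ⟨⟨0, hRpos⟩, Finset.mem_univ _⟩
  obtain ⟨α, -, hαmax⟩ := Finset.exists_max_image (Finset.univ : Finset (Fin R)) (cnt w) hne
  have hψw0 : (0:ℝ) ≤ ∑ j, ψ j (w j) := Finset.sum_nonneg fun j _ => hψ _ _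
  -- Bound B0 : lam * n^2 ≤ F vhat
  obtain ⟨u0, hu0k, -, hu0F⟩ := hvhat α α n le_rfl
  simp only [or_self] at hu0k
  have hB0 : lam * ((n:ℝ))^2 ≤ F vhat := by
    have h1 : (((n:ℕ):ℝ))^2 ≤ ∑ v, ((cnt u0 v:ℝ))^2 := by
      have h := sq_sum_ge_single u0 α
      rwa [show cnt u0 α = n from hu0k] at h
    have h2 : (0:ℝ) ≤ ∑ j, ψ j (u0 j) := Finset.sum_nonneg fun j _ => hψ _ _
    have h3 := mul_le_mul_of_nonneg_left h1 hlam.le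
    rw [hF' u0] at hu0F
    linarith
  -- Bound B1 : ψ* + lam * a^2 ≤ F vhat
  obtain ⟨u1, hu1k, hu1ψ, hu1F⟩ := hvhat α α (cnt w α) (cnt_le w α)
  simp only [or_self] at hu1k hu1ψ
  have hψ1 : ∑ j, ψ j (w j) ≤ ∑ j, ψ j (u1 j) := hu1ψ w rfl
  have hB1 : (∑ j, ψ j (w j)) + lam * ((cnt w α:ℝ))^2 ≤ F vhat := by
    have h1 : ((cnt w α:ℝ))^2 ≤ ∑ v, ((cnt u1 v:ℝ))^2 := by
      have h := sq_sum_ge_single u1 α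
      rwa [show cnt u1 α = cnt w α from hu1k] at h
    have h3 := mul_le_mul_of_nonneg_left h1 hlam.le
    rw [hF' u1] at hu1F
    linarith
  by_cases hex : ∃ β : Fin R, β ≠ α
  · -- general case: there is a second value
    obtain ⟨β0, hβ0⟩ := hex
    obtain ⟨β, hβmem, hβmax⟩ := Finset.exists_max_image
      ((Finset.univ : Finset (Fin R)).erase α) (cnt w)
      ⟨β0, Finset.mem_erase.2 ⟨hβ0, Finset.mem_univ _⟩⟩
    have hαβ : α ≠ β := (Finset.mem_erase.1 hβmem).1.symm
    have hb : ∀ v : Fin R, v ≠ α → cnt w v ≤ cnt w β := fun v hv =>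
      hβmax v (Finset.mem_erase.2 ⟨hv, Finset.mem_univ _⟩)
    have hba : cnt w β ≤ cnt w α := hαmax β (Finset.mem_univ _)
    have hkn : cnt w α + cnt w β ≤ n := by
      rw [← cnt_pair w hαβ]
      simpa using Finset.card_filter_le (Finset.univ : Finset (Fin n)) _
    -- Bound B2
    obtain ⟨u2, hu2k, hu2ψ, hu2F⟩ := hvhat α β (cnt w α + cnt w β) hkn
    have hψ2 : ∑ j, ψ j (w j) ≤ ∑ j, ψ j (u2 j) := hu2ψ w (cnt_pair w hαβ)
    have hu2c : cnt u2 α + cnt u2 β = cnt w α + cnt w β := by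
      rw [← cnt_pair u2 hαβ]; exact hu2k
    have hB2 : (∑ j, ψ j (w j)) + lam * (((cnt w α:ℝ) + (cnt w β:ℝ))^2 / 2) ≤ F vhat := by
      have hc : (cnt u2 α:ℝ) + (cnt u2 β:ℝ) = (cnt w α:ℝ) + (cnt w β:ℝ) := by
        exact_mod_cast congrArg (Nat.cast : ℕ → ℝ) hu2c
      have h1 := sq_sum_ge_pair u2 hαβ
      have h2 : ((cnt w α:ℝ) + (cnt w β:ℝ))^2 / 2 ≤ ∑ v, ((cnt u2 v:ℝ))^2 := by
        nlinarith [sq_nonneg ((cnt u2 α:ℝ) - (cnt u2 β:ℝ))]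
      have h3 := mul_le_mul_of_nonneg_left h2 hlam.le
      rw [hF' u2] at hu2F
      linarith
    -- bound on the sum of squared counts of w
    have hs1 : ∑ v, ((cnt w v:ℝ))^2
        = ((cnt w α:ℝ))^2 + ∑ v ∈ (Finset.univ : Finset (Fin R)).erase α, ((cnt w v:ℝ))^2 := by
      rw [← Finset.sum_erase_add _ _ (Finset.mem_univ α)]; ring
    have hs3 : ∑ v ∈ (Finset.univ : Finset (Fin R)).erase α, ((cnt w v:ℝ)) = (n:ℝ) - (cnt w α:ℝ) := by
      have h : ∑ v ∈ (Finset.univ : Finset (Fin R)).erase α, cnt w v + cnt w α = n := by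
        rw [Finset.sum_erase_add _ _ (Finset.mem_univ α)]; exact cnt_sum w
      have h' : ((∑ v ∈ (Finset.univ : Finset (Fin R)).erase α, cnt w v : ℕ) : ℝ)
          + ((cnt w α : ℕ) : ℝ) = (n:ℝ) := by exact_mod_cast h
      push_cast at h' ⊢
      linarith
    have hs2 : ∑ v ∈ (Finset.univ : Finset (Fin R)).erase α, ((cnt w v:ℝ))^2
        ≤ (cnt w β:ℝ) * ((n:ℝ) - (cnt w α:ℝ)) := by
      rw [← hs3, Finset.mul_sum]
      apply Finset.sum_le_sum
      intro v hv
      have hvb : (cnt w v:ℝ) ≤ (cnt w β:ℝ) := Nat.cast_le.2 (hb v (Finset.mem_erase.1 hv).1)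
      have hv0 : (0:ℝ) ≤ (cnt w v:ℝ) := Nat.cast_nonneg _
      nlinarith
    have hsbound : ∑ v, ((cnt w v:ℝ))^2
        ≤ ((cnt w α:ℝ))^2 + (cnt w β:ℝ) * ((n:ℝ) - (cnt w α:ℝ)) := by
      rw [hs1]; linarith
    have hBA : (cnt w β:ℝ) ≤ (cnt w α:ℝ) := Nat.cast_le.2 hba
    have hBnn : (0:ℝ) ≤ (cnt w β:ℝ) := Nat.cast_nonneg _
    have hBY : (cnt w β:ℝ) ≤ (n:ℝ) - (cnt w α:ℝ) := by
      rw [← hs3]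
      exact Finset.single_le_sum (f := fun v => ((cnt w v:ℝ)))
        (fun v _ => Nat.cast_nonneg _) hβmem
    have hb0' : lam * ((cnt w α:ℝ) + ((n:ℝ) - (cnt w α:ℝ)))^2 ≤ F vhat := by
      have e : (cnt w α:ℝ) + ((n:ℝ) - (cnt w α:ℝ)) = (n:ℝ) := by ring
      rw [e]; exact hB0
    rw [hF' w]
    exact combine_bounds lam (∑ j, ψ j (w j)) (∑ v, ((cnt w v:ℝ))^2)
      ((cnt w α:ℝ)) ((cnt w β:ℝ)) ((n:ℝ) - (cnt w α:ℝ)) (F vhat)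
      hlam hψw0 hb0' hB1 hB2 hsbound hBA hBnn hBY
  · -- degenerate case: only one value
    push_neg at hex
    have huniv : (Finset.univ : Finset (Fin R)) = {α} := by
      ext v; simp [hex v]
    have hs : ∑ v, ((cnt w v:ℝ))^2 = ((cnt w α:ℝ))^2 := by
      rw [huniv, Finset.sum_singleton]
    have hFw : F w ≤ F vhat := by rw [hF' w, hs]; exact hB1
    have hFw0 : (0:ℝ) ≤ F w := by
      rw [hF' w]
      have : (0:ℝ) ≤ ∑ v, ((cnt w v:ℝ))^2 :=
        Finset.sum_nonneg fun v _ => by positivity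
      nlinarith
    linarith
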